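/- Let T be a bounded linear operator on a separable Banach space X and M a closed nontrivial subspace of X. If for any two nonempty relatively open sets U and V in M there exist n ∈ ℕ and α ∈ ℂ with |α| ≥ 1 such that T^{-n}(αU) ∩ V contains a nonempty relatively open subset of M, then for any two such open sets U, V there exist n ∈ ℕ and α with |α| ≥ 1 such that T^{-n}(αU) ∩ V is nonempty and T^n(M) ⊆ M. -/

import Mathlib

open Pointwise

/-- `U` is relatively open in `M` (as a subset of the ambient space). -/
def RelOpenIn {X : Type*} [TopologicalSpace X] (M U : Set X) : Prop :=
  ∃ O : Set X, IsOpen O ∧ U = O ∩ M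

theorem stmt_0 {X : Type*} [NormedAddCommGroup X] [NormedSpace ℂ X] [CompleteSpace X]
    [TopologicalSpace.SeparableSpace X]
    (T : X →L[ℂ] X) (M : Submodule ℂ X) (hMcl : IsClosed (M : Set X))
    (hMbot : M ≠ ⊥) (hMtop : M ≠ ⊤)
    (htrans : ∀ U V : Set X, U ⊆ (M : Set X) → V ⊆ (M : Set X) →
      U.Nonempty → V.Nonempty → RelOpenIn (M : Set X) U → RelOpenIn (M : Set X) V →
      ∃ (n : ℕ) (α : ℂ), 1 ≤ ‖α‖ ∧ ∃ G : Set X, G.Nonempty ∧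
        RelOpenIn (M : Set X) G ∧ G ⊆ (⇑(T ^ n)) ⁻¹' (α • U) ∩ V) :
    ∀ U V : Set X, U ⊆ (M : Set X) → V ⊆ (M : Set X) →
      U.Nonempty → V.Nonempty → RelOpenIn (M : Set X) U → RelOpenIn (M : Set X) V →
      ∃ (n : ℕ) (α : ℂ), 1 ≤ ‖α‖ ∧ ((⇑(T ^ n)) ⁻¹' (α • U) ∩ V).Nonempty ∧
        ∀ x ∈ M, (T ^ n) x ∈ M := by
  intro U V hUM hVM hUne hVne hUo hVo
  obtain ⟨n, α, hα, G, ⟨g, hg⟩, ⟨O, hO, hGO⟩, hGsub⟩ :=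
    htrans U V hUM hVM hUne hVne hUo hVo
  refine ⟨n, α, hα, ⟨g, hGsub hg⟩, ?_⟩
  -- α • U ⊆ M
  have hαU : (α • U : Set X) ⊆ (M : Set X) := by
    rintro _ ⟨u, hu, rfl⟩
    exact M.smul_mem α (hUM hu)
  have hgO : g ∈ O := by rw [hGO] at hg; exact hg.1
  have hgM : g ∈ M := by rw [hGO] at hg; exact hg.2
  obtain ⟨ε, hε, hball⟩ := Metric.isOpen_iff.mp hO g hgO
  intro x hx
  set t : ℝ := ε / (2 * (‖x‖ + 1)) with ht
  have hxpos : (0:ℝ) < ‖x‖ + 1 := by positivity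
  have htpos : 0 < t := by positivity
  have hmem : g + (t : ℂ) • x ∈ G := by
    rw [hGO]
    constructor
    · apply hball
      rw [Metric.mem_ball, dist_eq_norm]
      have : g + (t : ℂ) • x - g = (t : ℂ) • x := add_sub_cancel_left g _
      rw [this, norm_smul]
      have h1 : ‖(t : ℂ)‖ = t := by
        simp [Complex.norm_real, abs_of_pos htpos]
      rw [h1, ht]
      calc ε / (2 * (‖x‖ + 1)) * ‖x‖ < ε / (2 * (‖x‖ + 1)) * (‖x‖ + 1) := by
            apply mul_lt_mul_of_pos_left (by linarith) (by positivity)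
        _ = ε / 2 := by field_simp
        _ < ε := by linarith
    · exact M.add_mem hgM (M.smul_mem _ hx)
  have h1 : (T ^ n) (g + (t : ℂ) • x) ∈ M := hαU (hGsub hmem).1
  have h2 : (T ^ n) g ∈ M := hαU (hGsub hg).1
  have h3 : (t : ℂ) • (T ^ n) x ∈ M := by
    have : (t : ℂ) • (T ^ n) x = (T ^ n) (g + (t : ℂ) • x) - (T ^ n) g := by
      rw [map_add, map_smul, add_sub_cancel_left]
    rw [this]
    exact M.sub_mem h1 h2
  have h4 := M.smul_mem ((t : ℂ))⁻¹ h3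
  rwa [inv_smul_smul₀ (by exact_mod_cast htpos.ne')] at h4
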